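/- There exist constants c, C > 0 such that for all 0 ≤ r ≤ s: c · ((s−r)/(1+s−r)) · (s/(1+s)) · e^s ≤ cosh s − cosh r ≤ C · ((s−r)/(1+s−r)) · (s/(1+s)) · e^s. -/

import Mathlib

private lemma sinh_up (u : ℝ) (hu : 0 ≤ u) :
    (1 + u) * Real.sinh u ≤ 2 * (u * Real.exp u) := by
  have ht : 1 + u ≤ Real.exp u := by linarith [Real.add_one_le_exp u]
  have ht0 : 0 < Real.exp u := Real.exp_pos u
  have hinv : Real.exp (-u) * Real.exp u = 1 := by
    rw [← Real.exp_add]; simp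
  have h2 : 1 - 2*u ≤ Real.exp (-u) * Real.exp (-u) := by
    have := Real.add_one_le_exp (-(2*u))
    calc 1 - 2*u ≤ Real.exp (-(2*u)) := by linarith
    _ = Real.exp (-u) * Real.exp (-u) := by rw [← Real.exp_add]; ring_nf
  rw [Real.sinh_eq]
  have hinv0 : 0 < Real.exp (-u) := Real.exp_pos _
  nlinarith [mul_nonneg hu (sub_nonneg.2 ht), mul_pos ht0 ht0,
    mul_le_mul_of_nonneg_right h2 (le_of_lt (mul_pos ht0 ht0)),
    mul_nonneg hu (mul_nonneg ht0.le ht0.le),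
    mul_nonneg (mul_nonneg hu hu) (mul_nonneg ht0.le ht0.le),
    mul_nonneg (mul_nonneg hu ht0.le) (sub_nonneg.2 ht)]

private lemma sinh_low (u : ℝ) (hu : 0 ≤ u) :
    u * Real.exp u ≤ 4 * ((1 + u) * Real.sinh u) := by
  have ht : 1 + u ≤ Real.exp u := by linarith [Real.add_one_le_exp u]
  have ht0 : 0 < Real.exp u := Real.exp_pos u
  have hinv : Real.exp (-u) * Real.exp u = 1 := by
    rw [← Real.exp_add]; simp
  rw [Real.sinh_eq]
  nlinarith [mul_nonneg hu (sub_nonneg.2 ht), mul_nonneg hu hu,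
    mul_nonneg (mul_nonneg hu hu) ht0.le,
    mul_nonneg hu (mul_nonneg ht0.le (sub_nonneg.2 ht))]

private lemma prod_formula (r s : ℝ) :
    Real.cosh s - Real.cosh r
      = 2 * Real.sinh ((s - r)/2) * Real.sinh ((s + r)/2) := by
  have h1 : Real.exp ((s-r)/2) * Real.exp ((s+r)/2) = Real.exp s := by
    rw [← Real.exp_add]; ring_nf
  have h2 : Real.exp (-((s-r)/2)) * Real.exp (-((s+r)/2)) = Real.exp (-s) := by
    rw [← Real.exp_add]; ring_nf
  have h3 : Real.exp ((s-r)/2) * Real.exp (-((s+r)/2)) = Real.exp (-r) := by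
    rw [← Real.exp_add]; ring_nf
  have h4 : Real.exp (-((s-r)/2)) * Real.exp ((s+r)/2) = Real.exp r := by
    rw [← Real.exp_add]; ring_nf
  rw [Real.cosh_eq, Real.cosh_eq, Real.sinh_eq, Real.sinh_eq]
  linear_combination (1/2) * (h3 + h4 - h1 - h2)

private lemma frac_mono {a b : ℝ} (ha : 0 ≤ a) (hab : a ≤ b) :
    a / (1 + a) ≤ b / (1 + b) := by
  have hb : 0 ≤ b := le_trans ha hab
  rw [div_le_div_iff₀ (by linarith) (by linarith)]
  nlinarith

private lemma sinh_nonneg' {w : ℝ} (hw : 0 ≤ w) : 0 ≤ Real.sinh w := by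
  have := Real.exp_le_exp.2 (by linarith : -w ≤ w)
  rw [Real.sinh_eq]; linarith

theorem cosh_sub_cosh_comparable :
    ∃ c C : ℝ, 0 < c ∧ 0 < C ∧ ∀ r s : ℝ, 0 ≤ r → r ≤ s →
      c * ((s - r) / (1 + s - r)) * (s / (1 + s)) * Real.exp s ≤
        Real.cosh s - Real.cosh r ∧
      Real.cosh s - Real.cosh r ≤
        C * ((s - r) / (1 + s - r)) * (s / (1 + s)) * Real.exp s := by
  refine ⟨1/32, 8, by norm_num, by norm_num, fun r s hr hrs => ?_⟩
  set u := (s - r)/2 with hu_def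
  set v := (s + r)/2 with hv_def
  have hu : 0 ≤ u := by rw [hu_def]; linarith
  have hv : 0 ≤ v := by rw [hv_def]; linarith
  have hs : 0 ≤ s := le_trans hr hrs
  have huv : u + v = s := by rw [hu_def, hv_def]; ring
  have hx : 0 ≤ s - r := by linarith
  have h1u : (0:ℝ) < 1 + u := by linarith
  have h1v : (0:ℝ) < 1 + v := by linarith
  have h1x : (0:ℝ) < 1 + (s - r) := by linarith
  have h1s : (0:ℝ) < 1 + s := by linarith
  have hexp : Real.exp u * Real.exp v = Real.exp s := by
    rw [← Real.exp_add, huv]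
  have hpf := prod_formula r s
  have hfu_le : u / (1 + u) ≤ (s - r) / (1 + (s - r)) := frac_mono hu (by rw [hu_def]; linarith)
  have hfv_le : v / (1 + v) ≤ s / (1 + s) := frac_mono hv (by rw [hv_def]; linarith)
  have hfu_ge : (1/2) * ((s - r) / (1 + (s - r))) ≤ u / (1 + u) := by
    rw [show (1/2 : ℝ) * ((s - r) / (1 + (s - r))) = (s - r) / ((1 + (s - r)) * 2) by rw [div_mul_eq_mul_div, one_mul, div_div],
      div_le_div_iff₀ (by positivity) h1u, hu_def]
    nlinarith
  have hfv_ge : (1/2) * (s / (1 + s)) ≤ v / (1 + v) := by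
    rw [show (1/2 : ℝ) * (s / (1 + s)) = s / ((1 + s) * 2) by rw [div_mul_eq_mul_div, one_mul, div_div],
      div_le_div_iff₀ (by positivity) h1v, hv_def]
    nlinarith
  have sinh_up' : ∀ w : ℝ, 0 ≤ w → Real.sinh w ≤ 2 * (w / (1 + w)) * Real.exp w := by
    intro w hw
    have h1w : (0:ℝ) < 1 + w := by linarith
    have h := sinh_up w hw
    rw [show 2 * (w / (1 + w)) * Real.exp w = 2 * (w * Real.exp w) / (1 + w) by field_simp <;> ring,
      le_div_iff₀ h1w]
    nlinarith
  have sinh_low' : ∀ w : ℝ, 0 ≤ w → (1/4) * (w / (1 + w)) * Real.exp w ≤ Real.sinh w := by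
    intro w hw
    have h1w : (0:ℝ) < 1 + w := by linarith
    have h := sinh_low w hw
    rw [show (1/4 : ℝ) * (w / (1 + w)) * Real.exp w = w * Real.exp w / (4 * (1 + w)) by field_simp,
      div_le_iff₀ (by linarith : (0:ℝ) < 4 * (1 + w))]
    nlinarith
  have hsu_up := sinh_up' u hu
  have hsv_up := sinh_up' v hv
  have hsu_low := sinh_low' u hu
  have hsv_low := sinh_low' v hv
  have hsu0 : 0 ≤ Real.sinh u := sinh_nonneg' hu
  have hsv0 : 0 ≤ Real.sinh v := sinh_nonneg' hv
  have heu : 0 < Real.exp u := Real.exp_pos u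
  have hev : 0 < Real.exp v := Real.exp_pos v
  have hfu0 : 0 ≤ u / (1 + u) := div_nonneg hu h1u.le
  have hfv0 : 0 ≤ v / (1 + v) := div_nonneg hv h1v.le
  have hfx0 : 0 ≤ (s - r) / (1 + (s - r)) := div_nonneg hx h1x.le
  have hfs0 : 0 ≤ s / (1 + s) := div_nonneg hs h1s.le
  have harg : (1 : ℝ) + s - r = 1 + (s - r) := by ring
  rw [hpf, harg]
  constructor
  · calc (1/32 : ℝ) * ((s - r) / (1 + (s - r))) * (s / (1 + s)) * Real.exp s
        = 2 * ((1/4) * ((1/2) * ((s - r) / (1 + (s - r)))) * Real.exp u)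
            * ((1/4) * ((1/2) * (s / (1 + s))) * Real.exp v) := by
          rw [← hexp]; ring
    _ ≤ 2 * ((1/4) * (u / (1+u)) * Real.exp u) * ((1/4) * (v / (1+v)) * Real.exp v) := by
          gcongr <;> first | positivity | linarith
    _ ≤ 2 * Real.sinh u * Real.sinh v := by
          gcongr <;> first | positivity | linarith
  · calc 2 * Real.sinh u * Real.sinh v
        ≤ 2 * (2 * (u / (1+u)) * Real.exp u) * (2 * (v / (1+v)) * Real.exp v) := by
          gcongr <;> first | positivity | linarith
    _ ≤ 2 * (2 * ((s - r) / (1 + (s - r))) * Real.exp u) * (2 * (s / (1 + s)) * Real.exp v) := by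
          gcongr <;> first | positivity | linarith
    _ = 8 * ((s - r) / (1 + (s - r))) * (s / (1 + s)) * Real.exp s := by
          rw [← hexp]; ring
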